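/- arXiv:1908.05321 — 3 statements merged into one kernel-verified Lean document; each statement's English description precedes it below -/
import Mathlib

section
/- In G = ℤ[1/k] ⋊ ℤ with ℤ acting by multiplication by k, every conjugacy class of a nonzero element (y,0) of the base subgroup contains a unique element (x,0) such that x ∈ ℤ and k does not divide x. -/
/-- ℤ[1/k] = {x ∈ ℚ | k^e x ∈ ℤ for some e ∈ ℤ}. -/
def Zk (k : ℤ) : Set ℚ := {x | ∃ e : ℤ, ∃ n : ℤ, (k : ℚ) ^ e * x = (n : ℚ)}

/-- Multiplication in G = ℤ[1/k] ⋊ ℤ (modelled on ℚ × ℤ): (x,a)(y,b) = (x + k^a y, a+b). -/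
def mulG (k : ℤ) (g h : ℚ × ℤ) : ℚ × ℤ := (g.1 + (k : ℚ) ^ g.2 * h.1, g.2 + h.2)

/-- Inversion in G: (x,a)⁻¹ = (-k^{-a} x, -a). -/
def invG (k : ℤ) (g : ℚ × ℤ) : ℚ × ℤ := (-((k : ℚ) ^ (-g.2) * g.1), -g.2)

/-- Conjugation h^g = g h g⁻¹. -/
def conjG (k : ℤ) (g h : ℚ × ℤ) : ℚ × ℤ := mulG k (mulG k g h) (invG k g)

/-- Two elements are conjugate in G = ℤ[1/k] ⋊ ℤ (conjugator has base coordinate in ℤ[1/k]). -/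
def IsConjG (k : ℤ) (h h' : ℚ × ℤ) : Prop :=
  ∃ g : ℚ × ℤ, g.1 ∈ Zk k ∧ conjG k g h = h'

lemma exists_pow_mul_not_dvd (k : ℤ) (hk : 2 ≤ k) (n : ℤ) (hn : n ≠ 0) :
    ∃ v : ℕ, ∃ m : ℤ, n = k ^ v * m ∧ ¬ k ∣ m := by
  have hfin : FiniteMultiplicity k n :=
    Int.finiteMultiplicity_iff.2 ⟨by omega, hn⟩
  obtain ⟨m, h1, h2⟩ := hfin.exists_eq_pow_mul_and_not_dvd
  exact ⟨_, m, h1, h2⟩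

lemma conj_eq (k : ℤ) (hk0 : (k:ℚ) ≠ 0) (g : ℚ × ℤ) (y : ℚ) :
    conjG k g (y, 0) = ((k:ℚ) ^ g.2 * y, 0) := by
  simp only [conjG, mulG, invG, Prod.mk.injEq, add_zero]
  constructor
  · have : (k:ℚ) ^ g.2 * ((k:ℚ) ^ (-g.2) * g.1) = g.1 := by
      rw [← mul_assoc, ← zpow_add₀ hk0]; simp
    rw [mul_neg, this]; ring
  · ring

lemma isConjG_iff (k : ℤ) (hk0 : (k:ℚ) ≠ 0) (y x : ℚ) :
    IsConjG k (y, 0) (x, 0) ↔ ∃ e : ℤ, (k:ℚ) ^ e * y = x := by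
  constructor
  · rintro ⟨g, -, hc⟩
    rw [conj_eq k hk0] at hc
    exact ⟨g.2, congrArg Prod.fst hc⟩
  · rintro ⟨e, he⟩
    exact ⟨(0, e), ⟨0, 0, by simp⟩, by rw [conj_eq k hk0]; simp [he]⟩

lemma int_eq_of_zpow (k : ℤ) (hk : 2 ≤ k) (a : ℤ) (x m : ℤ) (hx : ¬ k ∣ x) (hm : ¬ k ∣ m)
    (h : (k:ℚ) ^ a * (m:ℚ) = (x:ℚ)) : x = m := by
  have hk0 : (k:ℚ) ≠ 0 := by exact_mod_cast (by omega : k ≠ 0)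
  rcases lt_trichotomy a 0 with h1 | h1 | h1
  · exfalso; apply hm
    have h2 : (k:ℚ) ^ (-a) * (x:ℚ) = (m:ℚ) := by
      rw [← h, ← mul_assoc, ← zpow_add₀ hk0]; simp
    set b := (-a).toNat with hbdef
    have hb : -a = (b:ℤ) := by omega
    rw [hb, zpow_natCast] at h2
    have heq : k ^ b * x = m := by exact_mod_cast h2
    exact heq ▸ dvd_mul_of_dvd_left (dvd_pow_self k (by omega : b ≠ 0)) x
  · subst h1; rw [zpow_zero, one_mul] at h; exact_mod_cast h.symm
  · exfalso; apply hx
    set b := a.toNat with hbdef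
    have hb : a = (b:ℤ) := by omega
    rw [hb, zpow_natCast] at h
    have heq : k ^ b * m = x := by exact_mod_cast h
    exact heq ▸ dvd_mul_of_dvd_left (dvd_pow_self k (by omega : b ≠ 0)) m

theorem unique_integer_rep (k : ℤ) (hk : 2 ≤ k) (y : ℚ) (hy : y ∈ Zk k) (hy0 : y ≠ 0) :
    ∃! x : ℤ, ¬ (k ∣ x) ∧ IsConjG k (y, 0) ((x : ℚ), 0) := by
  have hk0 : (k:ℚ) ≠ 0 := by exact_mod_cast (by omega : k ≠ 0)
  obtain ⟨e0, n, hn⟩ := hy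
  have hn0 : n ≠ 0 := by
    rintro rfl
    simp only [Int.cast_zero, mul_eq_zero] at hn
    rcases hn with h | h
    · exact zpow_ne_zero e0 hk0 h
    · exact hy0 h
  obtain ⟨v, m, hm, hdm⟩ := exists_pow_mul_not_dvd k hk n hn0
  have key : (k:ℚ) ^ (e0 - (v:ℤ)) * y = (m:ℚ) := by
    have h1 : ((n:ℚ)) = (k:ℚ) ^ (v:ℤ) * (m:ℚ) := by
      rw [zpow_natCast]; exact_mod_cast congrArg (Int.cast : ℤ → ℚ) hm
    have h2 : (k:ℚ) ^ (e0 - (v:ℤ)) = (k:ℚ) ^ e0 * ((k:ℚ) ^ (v:ℤ))⁻¹ := by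
      rw [← zpow_neg, ← zpow_add₀ hk0]; ring_nf
    rw [h2, mul_comm ((k:ℚ)^e0) _, mul_assoc, hn, h1, ← mul_assoc,
      inv_mul_cancel₀ (zpow_ne_zero _ hk0), one_mul]
  refine ⟨m, ⟨hdm, (isConjG_iff k hk0 y m).2 ⟨e0 - v, key⟩⟩, ?_⟩
  rintro x ⟨hx, hcx⟩
  obtain ⟨e1, he1⟩ := (isConjG_iff k hk0 y (x:ℚ)).1 hcx
  have h3 : (k:ℚ) ^ (e1 - (e0 - (v:ℤ))) * (m:ℚ) = (x:ℚ) := by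
    rw [← key, ← mul_assoc, ← zpow_add₀ hk0, sub_add_cancel, he1]
  exact int_eq_of_zpow k hk _ x m hx hdm h3
end

section
/- For every r ≥ 1, the polynomial p(z) = 1 - 2z - z² + 2z^{r+2} has a unique root ρ in the interval (0, 1/2] (with ρ = 1/2 exactly when r = 1), and this root is simple: p'(α) < 0 for all 0 < α ≤ 1/2. -/
/-- p(z) = 1 - 2z - z² + 2z^{r+2}. -/
def pPoly (r : ℕ) (z : ℝ) : ℝ := 1 - 2 * z - z ^ 2 + 2 * z ^ (r + 2)

lemma pPoly_hasDerivAt (r : ℕ) (z : ℝ) :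
    HasDerivAt (pPoly r) (-2 - 2 * z + 2 * (r + 2) * z ^ (r + 1)) z := by
  have h : HasDerivAt (fun z : ℝ => 1 - 2 * z - z ^ 2 + 2 * z ^ (r + 2))
      (0 - 2 * 1 - (2 : ℕ) * z ^ (2 - 1) + 2 * ((↑(r + 2) : ℝ) * z ^ (r + 2 - 1))) z := by
    exact ((((hasDerivAt_const z (1 : ℝ)).sub ((hasDerivAt_id z).const_mul 2)).sub
      (hasDerivAt_pow 2 z)).add ((hasDerivAt_pow (r + 2) z).const_mul 2))
  convert h using 1
  · rfl
  push_cast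
  ring_nf

lemma nat_ineq (r : ℕ) (hr : 1 ≤ r) : 2 * (r + 2) ≤ 3 * 2 ^ r := by
  induction r with
  | zero => omega
  | succ n ih =>
    rcases Nat.eq_or_lt_of_le hr with h | h
    · simp [← h]
    · have := ih (by omega)
      have : 3 * 2 ^ n ≤ 3 * 2 ^ (n + 1) := by
        have : (2:ℕ) ^ n ≤ 2 ^ (n+1) := Nat.pow_le_pow_right (by norm_num) (by omega)
        omega
      omega

lemma pDeriv_neg (r : ℕ) (hr : 1 ≤ r) {α : ℝ} (h0 : 0 < α) (h2 : α ≤ 1 / 2) :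
    -2 - 2 * α + 2 * (r + 2) * α ^ (r + 1) < 0 := by
  have hp : α ^ (r + 1) ≤ (1 / 2 : ℝ) ^ (r + 1) := pow_le_pow_left₀ h0.le h2 _
  have hn : (2 * (r + 2) : ℝ) ≤ 3 * 2 ^ r := by exact_mod_cast nat_ineq r hr
  have hpow : ((1:ℝ)/2) ^ (r+1) = 1 / (2 * 2 ^ r) := by
    rw [div_pow, one_pow, pow_succ]; ring_nf
  have h2r : (0:ℝ) < 2 ^ r := by positivity
  have key : 2 * ((r:ℝ) + 2) * α ^ (r + 1) ≤ 3 / 2 := by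
    calc 2 * ((r:ℝ) + 2) * α ^ (r + 1) ≤ 2 * ((r:ℝ) + 2) * ((1/2) ^ (r+1)) := by
          apply mul_le_mul_of_nonneg_left hp; positivity
      _ = (2 * ((r:ℝ) + 2)) / (2 * 2 ^ r) := by rw [hpow]; ring
      _ ≤ 3 / 2 := by
          rw [div_le_div_iff₀ (by positivity) (by norm_num)]
          nlinarith
  nlinarith

lemma pPoly_strictAntiOn (r : ℕ) (hr : 1 ≤ r) :
    StrictAntiOn (pPoly r) (Set.Icc (0 : ℝ) (1 / 2)) := by
  apply strictAntiOn_of_deriv_neg (convex_Icc _ _)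
  · apply Continuous.continuousOn
    unfold pPoly; continuity
  · intro x hx
    rw [interior_Icc] at hx
    rw [(pPoly_hasDerivAt r x).deriv]
    exact pDeriv_neg r hr hx.1 hx.2.le

lemma pPoly_half (r : ℕ) : pPoly r (1 / 2) = 2 * (1 / 2 : ℝ) ^ (r + 2) - 1 / 4 := by
  unfold pPoly; ring

lemma pPoly_half_nonpos (r : ℕ) (hr : 1 ≤ r) : pPoly r (1 / 2) ≤ 0 := by
  rw [pPoly_half]
  have : ((1:ℝ)/2) ^ (r + 2) ≤ (1/2) ^ 3 :=
    pow_le_pow_of_le_one (by norm_num) (by norm_num) (by omega)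
  norm_num at this ⊢
  linarith

theorem pPoly_root_in_Ioc (r : ℕ) (hr : 1 ≤ r) :
    (∃! ρ : ℝ, ρ ∈ Set.Ioc (0 : ℝ) (1 / 2) ∧ pPoly r ρ = 0) ∧
    (∀ ρ ∈ Set.Ioc (0 : ℝ) (1 / 2), pPoly r ρ = 0 → (ρ = 1 / 2 ↔ r = 1)) ∧
    (∀ α ∈ Set.Ioc (0 : ℝ) (1 / 2), deriv (pPoly r) α < 0) := by
  have hanti := pPoly_strictAntiOn r hr
  have hinj := hanti.injOn
  have h0 : pPoly r 0 = 1 := by unfold pPoly; simp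
  have hhalf := pPoly_half_nonpos r hr
  -- existence
  have hex : ∃ ρ ∈ Set.Ioc (0 : ℝ) (1 / 2), pPoly r ρ = 0 := by
    have hcont : ContinuousOn (pPoly r) (Set.Icc 0 (1/2)) := by
      apply Continuous.continuousOn; unfold pPoly; continuity
    have := intermediate_value_Icc' (by norm_num : (0:ℝ) ≤ 1/2) hcont
    have h0mem : (0:ℝ) ∈ Set.Icc (pPoly r (1/2)) (pPoly r 0) := by
      rw [h0]; exact ⟨hhalf, by norm_num⟩
    obtain ⟨ρ, hρ, hρ0⟩ := this h0mem
    refine ⟨ρ, ⟨?_, hρ.2⟩, hρ0⟩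
    rcases hρ.1.lt_or_eq with h | h
    · exact h
    · exfalso; rw [← h, h0] at hρ0; norm_num at hρ0
  obtain ⟨ρ, hρmem, hρ0⟩ := hex
  have memIcc : ∀ x : ℝ, x ∈ Set.Ioc (0:ℝ) (1/2) → x ∈ Set.Icc (0:ℝ) (1/2) :=
    fun x hx => ⟨hx.1.le, hx.2⟩
  refine ⟨⟨ρ, ⟨hρmem, hρ0⟩, ?_⟩, ?_, ?_⟩
  · rintro y ⟨hymem, hy0⟩
    exact hinj (memIcc y hymem) (memIcc ρ hρmem) (by rw [hy0, hρ0])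
  · rintro σ hσmem hσ0
    constructor
    · intro hσ
      subst hσ
      rw [pPoly_half] at hσ0
      by_contra hne
      have hr2 : 2 ≤ r := by omega
      have : ((1:ℝ)/2) ^ (r + 2) ≤ (1/2) ^ 4 :=
        pow_le_pow_of_le_one (by norm_num) (by norm_num) (by omega)
      norm_num at this
      linarith
    · intro hr1
      subst hr1
      have hhalf0 : pPoly 1 (1/2) = 0 := by rw [pPoly_half]; norm_num
      exact hinj (memIcc σ hσmem) ⟨by norm_num, by norm_num⟩ (by rw [hσ0, hhalf0])
  · intro α hα
    rw [(pPoly_hasDerivAt r α).deriv]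
    exact pDeriv_neg r hr hα.1 hα.2
end

section
/- Let k = 2r with r ≥ 2, m ≥ 1, and suppose (x_i)_{i=0}^{m-1} and (y_i)_{i=0}^{m-1} are integer sequences satisfying: |x_i| ≤ r and |y_i| ≤ r for all i; for all i (indices mod m), if x_{i-1} = r then 0 ≤ x_i < r and if x_{i-1} = -r then -r < x_i ≤ 0, and the same for y; and Σ_{i=0}^{m-1}(x_i - y_i)k^i = k^m - 1. Then x_i - y_i = k - 1 for all i, m is even, and (y_i) alternates between the values -r and -(r-1). -/
private lemma q_cases (k c v q : ℤ) (hk : 2 ≤ k) (hc1 : -k ≤ c) (hc2 : c ≤ k)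
    (hv1 : -1 ≤ v) (hv2 : v ≤ 1) (hq : c - v = k * q) :
    c = v - k ∨ c = v ∨ c = v + k := by
  have h1 : -2 < q := by
    by_contra hcon
    push_neg at hcon
    have h2 : k * q ≤ k * (-2) := mul_le_mul_of_nonneg_left (by linarith) (by linarith)
    linarith
  have h2 : q < 2 := by
    by_contra hcon
    push_neg at hcon
    have h3 : k * 2 ≤ k * q := mul_le_mul_of_nonneg_left (by linarith) (by linarith)
    linarith
  interval_cases q
  · left; linarith
  · right; left; linarith
  · right; right; linarith

private lemma split_sum (x y : ℕ → ℤ) (k : ℤ) (j n : ℕ) :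
    ∑ i ∈ Finset.range (n + 1), (x (j + i) - y (j + i)) * k ^ i
      = (∑ i ∈ Finset.range n, (x (j + 1 + i) - y (j + 1 + i)) * k ^ i) * k
        + (x j - y j) := by
  rw [Finset.sum_range_succ', Finset.sum_mul]
  congr 1
  · exact Finset.sum_congr rfl fun i _ => by
      rw [show j + (i + 1) = j + 1 + i by omega]; ring
  · simp

theorem even_case_extremal_digits (r m : ℕ) (hr : 2 ≤ r) (hm : 1 ≤ m)
    (x y : ℕ → ℤ)
    (hxb : ∀ i < m, |x i| ≤ (r : ℤ)) (hyb : ∀ i < m, |y i| ≤ (r : ℤ))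
    (hxc : ∀ i < m,
      (x ((i + m - 1) % m) = (r : ℤ) → 0 ≤ x i ∧ x i < (r : ℤ)) ∧
      (x ((i + m - 1) % m) = -(r : ℤ) → -(r : ℤ) < x i ∧ x i ≤ 0))
    (hyc : ∀ i < m,
      (y ((i + m - 1) % m) = (r : ℤ) → 0 ≤ y i ∧ y i < (r : ℤ)) ∧
      (y ((i + m - 1) % m) = -(r : ℤ) → -(r : ℤ) < y i ∧ y i ≤ 0))
    (h : ∑ i ∈ Finset.range m, (x i - y i) * ((2 * r : ℤ)) ^ i = (2 * r : ℤ) ^ m - 1) :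
    (∀ i < m, x i - y i = 2 * (r : ℤ) - 1) ∧
    m % 2 = 0 ∧
    ((∀ i < m, y i = if i % 2 = 0 then -(r : ℤ) else -(r : ℤ) + 1) ∨
     (∀ i < m, y i = if i % 2 = 0 then -(r : ℤ) + 1 else -(r : ℤ))) := by
  have hr' : (2 : ℤ) ≤ (r : ℤ) := by exact_mod_cast hr
  have hK2 : (2 : ℤ) ≤ 2 * (r : ℤ) := by linarith
  have hK0 : (2 * (r : ℤ)) ≠ 0 := by linarith
  have hdb : ∀ i, i < m → -(2 * (r : ℤ)) ≤ x i - y i ∧ x i - y i ≤ 2 * (r : ℤ) := by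
    intro i hi
    have h1 := abs_le.mp (hxb i hi)
    have h2 := abs_le.mp (hyb i hi)
    constructor <;> linarith [h1.1, h1.2, h2.1, h2.2]
  have hoff : ∑ i ∈ Finset.range m, (x (0 + i) - y (0 + i)) * (2 * (r : ℤ)) ^ i
      = (2 * (r : ℤ)) ^ m - 1 := by
    simpa using h
  obtain ⟨p0, hp0⟩ : ∃ p, m = p + 1 := ⟨m - 1, by omega⟩
  -- first digit is -1 or 2r-1
  have hd0 : x 0 - y 0 = -1 ∨ x 0 - y 0 = 2 * (r : ℤ) - 1 := by
    have h0 := hoff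
    rw [hp0, split_sum x y (2 * (r : ℤ)) 0 p0] at h0
    have hq : (x 0 - y 0) - (-1)
        = (2 * (r : ℤ)) * ((2 * (r : ℤ)) ^ p0
          - ∑ i ∈ Finset.range p0, (x (0 + 1 + i) - y (0 + 1 + i)) * (2 * (r : ℤ)) ^ i) := by
      linear_combination h0
    rcases q_cases _ _ _ _ hK2 (hdb 0 hm).1 (hdb 0 hm).2 (by norm_num) (by norm_num) hq
      with h1 | h1 | h1
    · exfalso; have := (hdb 0 hm).1; linarith
    · left; linarith
    · right; linarith
  -- Lemma B: a tail sum can never equal a pure power of 2r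
  have lemB : ∀ n j, j + (n + 1) = m →
      ∑ i ∈ Finset.range (n + 1), (x (j + i) - y (j + i)) * (2 * (r : ℤ)) ^ i
        = (2 * (r : ℤ)) ^ (n + 1) → False := by
    intro n
    induction n with
    | zero =>
      intro j hj hsum
      simp only [Finset.sum_range_one, Nat.add_zero, pow_zero, mul_one, zero_add, pow_one]
        at hsum
      have hjm : j < m := by omega
      have hx1 := abs_le.mp (hxb j hjm)
      have hy1 := abs_le.mp (hyb j hjm)
      have hxj : x j = (r : ℤ) := by linarith [hx1.1, hx1.2, hy1.1, hy1.2]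
      have hyj : y j = -(r : ℤ) := by linarith [hx1.1, hx1.2, hy1.1, hy1.2]
      have hidx : (0 + m - 1) % m = j := by
        rw [show 0 + m - 1 = j by omega]
        exact Nat.mod_eq_of_lt hjm
      have hxc0 := (hxc 0 hm).1 (by rw [hidx]; exact hxj)
      have hyc0 := (hyc 0 hm).2 (by rw [hidx]; exact hyj)
      rcases hd0 with h1 | h1 <;> omega
    | succ p ih =>
      intro j hj hsum
      rw [split_sum x y (2 * (r : ℤ)) j (p + 1)] at hsum
      have hjm : j < m := by omega
      have hj1m : j + 1 < m := by omega
      have hq : (x j - y j) - 0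
          = (2 * (r : ℤ)) * ((2 * (r : ℤ)) ^ (p + 1)
            - ∑ i ∈ Finset.range (p + 1), (x (j + 1 + i) - y (j + 1 + i)) * (2 * (r : ℤ)) ^ i) := by
        linear_combination hsum
      have hidx : (j + 1 + m - 1) % m = j := by
        rw [show j + 1 + m - 1 = j + m by omega, Nat.add_mod_right]
        exact Nat.mod_eq_of_lt hjm
      have hx1 := abs_le.mp (hxb j hjm)
      have hy1 := abs_le.mp (hyb j hjm)
      rcases q_cases _ _ _ _ hK2 (hdb j hjm).1 (hdb j hjm).2 (by norm_num) (by norm_num) hq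
        with hc | hc | hc
    -- case d j = -2r
      · have hxj : x j = -(r : ℤ) := by linarith [hx1.1, hx1.2, hy1.1, hy1.2]
        have hyj : y j = (r : ℤ) := by linarith [hx1.1, hx1.2, hy1.1, hy1.2]
        have hT : ∑ i ∈ Finset.range (p + 1), (x (j + 1 + i) - y (j + 1 + i)) * (2 * (r : ℤ)) ^ i
            = (2 * (r : ℤ)) ^ (p + 1) + 1 := by
          have h2 : (∑ i ∈ Finset.range (p + 1),
                (x (j + 1 + i) - y (j + 1 + i)) * (2 * (r : ℤ)) ^ i) * (2 * (r : ℤ))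
              = ((2 * (r : ℤ)) ^ (p + 1) + 1) * (2 * (r : ℤ)) := by
            linear_combination hsum - hc
          exact mul_right_cancel₀ hK0 h2
        rw [split_sum x y (2 * (r : ℤ)) (j + 1) p] at hT
        have hq2 : (x (j + 1) - y (j + 1)) - 1
            = (2 * (r : ℤ)) * ((2 * (r : ℤ)) ^ p
              - ∑ i ∈ Finset.range p, (x (j + 1 + 1 + i) - y (j + 1 + 1 + i)) * (2 * (r : ℤ)) ^ i) := by
          linear_combination hT
        have hxcn := (hxc (j + 1) hj1m).2 (by rw [hidx]; exact hxj)
        have hycn := (hyc (j + 1) hj1m).1 (by rw [hidx]; exact hyj)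
        have hb2 := hdb (j + 1) hj1m
        rcases q_cases _ _ _ _ hK2 hb2.1 hb2.2 (by norm_num) (by norm_num) hq2
          with h1 | h1 | h1 <;> omega
    -- case d j = 0
      · have hT : ∑ i ∈ Finset.range (p + 1), (x (j + 1 + i) - y (j + 1 + i)) * (2 * (r : ℤ)) ^ i
            = (2 * (r : ℤ)) ^ (p + 1) := by
          have h2 : (∑ i ∈ Finset.range (p + 1),
                (x (j + 1 + i) - y (j + 1 + i)) * (2 * (r : ℤ)) ^ i) * (2 * (r : ℤ))
              = ((2 * (r : ℤ)) ^ (p + 1)) * (2 * (r : ℤ)) := by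
            linear_combination hsum - hc
          exact mul_right_cancel₀ hK0 h2
        exact ih (j + 1) (by omega) hT
    -- case d j = 2r
      · have hxj : x j = (r : ℤ) := by linarith [hx1.1, hx1.2, hy1.1, hy1.2]
        have hyj : y j = -(r : ℤ) := by linarith [hx1.1, hx1.2, hy1.1, hy1.2]
        have hT : ∑ i ∈ Finset.range (p + 1), (x (j + 1 + i) - y (j + 1 + i)) * (2 * (r : ℤ)) ^ i
            = (2 * (r : ℤ)) ^ (p + 1) - 1 := by
          have h2 : (∑ i ∈ Finset.range (p + 1),
                (x (j + 1 + i) - y (j + 1 + i)) * (2 * (r : ℤ)) ^ i) * (2 * (r : ℤ))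
              = ((2 * (r : ℤ)) ^ (p + 1) - 1) * (2 * (r : ℤ)) := by
            linear_combination hsum - hc
          exact mul_right_cancel₀ hK0 h2
        rw [split_sum x y (2 * (r : ℤ)) (j + 1) p] at hT
        have hq2 : (x (j + 1) - y (j + 1)) - (-1)
            = (2 * (r : ℤ)) * ((2 * (r : ℤ)) ^ p
              - ∑ i ∈ Finset.range p, (x (j + 1 + 1 + i) - y (j + 1 + 1 + i)) * (2 * (r : ℤ)) ^ i) := by
          linear_combination hT
        have hxcn := (hxc (j + 1) hj1m).1 (by rw [hidx]; exact hxj)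
        have hycn := (hyc (j + 1) hj1m).2 (by rw [hidx]; exact hyj)
        have hb2 := hdb (j + 1) hj1m
        rcases q_cases _ _ _ _ hK2 hb2.1 hb2.2 (by norm_num) (by norm_num) hq2
          with h1 | h1 | h1 <;> omega
  -- Lemma A: all digits equal 2r - 1
  have lemA : ∀ n j, j + n = m →
      ∑ i ∈ Finset.range n, (x (j + i) - y (j + i)) * (2 * (r : ℤ)) ^ i
        = (2 * (r : ℤ)) ^ n - 1 →
      ∀ i, i < n → x (j + i) - y (j + i) = 2 * (r : ℤ) - 1 := by
    intro n
    induction n with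
    | zero => intro j _ _ i hi; exact absurd hi (by omega)
    | succ p ih =>
      intro j hj hsum
      rw [split_sum x y (2 * (r : ℤ)) j p] at hsum
      have hjm : j < m := by omega
      have hq : (x j - y j) - (-1)
          = (2 * (r : ℤ)) * ((2 * (r : ℤ)) ^ p
            - ∑ i ∈ Finset.range p, (x (j + 1 + i) - y (j + 1 + i)) * (2 * (r : ℤ)) ^ i) := by
        linear_combination hsum
      have hb := hdb j hjm
      rcases q_cases _ _ _ _ hK2 hb.1 hb.2 (by norm_num) (by norm_num) hq with hc | hc | hc
      · exfalso; omega
      · exfalso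
        have hT : ∑ i ∈ Finset.range p, (x (j + 1 + i) - y (j + 1 + i)) * (2 * (r : ℤ)) ^ i
            = (2 * (r : ℤ)) ^ p := by
          have h2 : (∑ i ∈ Finset.range p,
                (x (j + 1 + i) - y (j + 1 + i)) * (2 * (r : ℤ)) ^ i) * (2 * (r : ℤ))
              = ((2 * (r : ℤ)) ^ p) * (2 * (r : ℤ)) := by
            linear_combination hsum - hc
          exact mul_right_cancel₀ hK0 h2
        rcases p with _ | p'
        · norm_num [Finset.sum_range_zero] at hT
        · exact lemB p' (j + 1) (by omega) hT
      · have hcc : x j - y j = 2 * (r : ℤ) - 1 := by linarith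
        have hT : ∑ i ∈ Finset.range p, (x (j + 1 + i) - y (j + 1 + i)) * (2 * (r : ℤ)) ^ i
            = (2 * (r : ℤ)) ^ p - 1 := by
          have h2 : (∑ i ∈ Finset.range p,
                (x (j + 1 + i) - y (j + 1 + i)) * (2 * (r : ℤ)) ^ i) * (2 * (r : ℤ))
              = ((2 * (r : ℤ)) ^ p - 1) * (2 * (r : ℤ)) := by
            linear_combination hsum - hcc
          exact mul_right_cancel₀ hK0 h2
        have hrest := ih (j + 1) (by omega) hT
        intro i hi
        rcases i with _ | i'
        · simpa using hcc
        · have h3 := hrest i' (by omega)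
          rw [show j + (i' + 1) = j + 1 + i' by omega]
          exact h3
  have hD : ∀ i, i < m → x i - y i = 2 * (r : ℤ) - 1 := by
    intro i hi
    have h4 := lemA m 0 (by omega) hoff i hi
    simpa using h4
  -- step 2: classify each pair
  have hx2 : ∀ i, i < m →
      (x i = (r : ℤ) ∧ y i = -(r : ℤ) + 1) ∨ (x i = (r : ℤ) - 1 ∧ y i = -(r : ℤ)) := by
    intro i hi
    have h1 := abs_le.mp (hxb i hi)
    have h2 := abs_le.mp (hyb i hi)
    have h3 := hD i hi
    omega
  have alt1 : ∀ i, i < m → x ((i + m - 1) % m) = (r : ℤ) → x i = (r : ℤ) - 1 := by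
    intro i hi hxp
    have h1 := (hxc i hi).1 hxp
    rcases hx2 i hi with ⟨h2, _⟩ | ⟨h2, _⟩
    · exfalso; omega
    · exact h2
  have alt2 : ∀ i, i < m → x ((i + m - 1) % m) = (r : ℤ) - 1 → x i = (r : ℤ) := by
    intro i hi hxp
    have hpm : (i + m - 1) % m < m := Nat.mod_lt _ (by omega)
    rcases hx2 _ hpm with ⟨h2, _⟩ | ⟨_, h3⟩
    · exfalso; omega
    · have h4 := (hyc i hi).2 h3
      rcases hx2 i hi with ⟨h5, _⟩ | ⟨_, h6⟩
      · exact h5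
      · exfalso; omega
  have hprev0 : (0 + m - 1) % m = m - 1 := by
    rw [show 0 + m - 1 = m - 1 by omega]
    exact Nat.mod_eq_of_lt (by omega)
  rcases hx2 0 hm with ⟨hx0, hy0⟩ | ⟨hx0, hy0⟩
  · -- x 0 = r
    have claim : ∀ i, i < m → x i = if i % 2 = 0 then (r : ℤ) else (r : ℤ) - 1 := by
      intro i
      induction i with
      | zero => intro _; simpa using hx0
      | succ i ihh =>
        intro hi1
        have hi : i < m := by omega
        have hprev : (i + 1 + m - 1) % m = i := by
          rw [show i + 1 + m - 1 = i + m by omega, Nat.add_mod_right]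
          exact Nat.mod_eq_of_lt hi
        by_cases hp : i % 2 = 0
        · have hxi : x i = (r : ℤ) := by simpa [hp] using ihh hi
          have h2 := alt1 (i + 1) hi1 (by rw [hprev]; exact hxi)
          rw [if_neg (by omega : ¬((i + 1) % 2 = 0))]
          exact h2
        · have hxi : x i = (r : ℤ) - 1 := by simpa [hp] using ihh hi
          have h2 := alt2 (i + 1) hi1 (by rw [hprev]; exact hxi)
          rw [if_pos (by omega : (i + 1) % 2 = 0)]
          exact h2
    have hmev : m % 2 = 0 := by
      by_contra hodd
      have h2 : x (m - 1) = (r : ℤ) := by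
        have h3 := claim (m - 1) (by omega)
        simpa [show (m - 1) % 2 = 0 by omega] using h3
      have h3 := alt1 0 hm (by rw [hprev0]; exact h2)
      omega
    refine ⟨fun i hi => hD i hi, hmev, Or.inr fun i hi => ?_⟩
    by_cases hp : i % 2 = 0
    · have hxi : x i = (r : ℤ) := by simpa [hp] using claim i hi
      rcases hx2 i hi with ⟨_, hy⟩ | ⟨h5, _⟩
      · rw [if_pos hp]; exact hy
      · exfalso; omega
    · have hxi : x i = (r : ℤ) - 1 := by simpa [hp] using claim i hi
      rcases hx2 i hi with ⟨h5, _⟩ | ⟨_, hy⟩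
      · exfalso; omega
      · rw [if_neg hp]; exact hy
  · -- x 0 = r - 1
    have claim : ∀ i, i < m → x i = if i % 2 = 0 then (r : ℤ) - 1 else (r : ℤ) := by
      intro i
      induction i with
      | zero => intro _; simpa using hx0
      | succ i ihh =>
        intro hi1
        have hi : i < m := by omega
        have hprev : (i + 1 + m - 1) % m = i := by
          rw [show i + 1 + m - 1 = i + m by omega, Nat.add_mod_right]
          exact Nat.mod_eq_of_lt hi
        by_cases hp : i % 2 = 0
        · have hxi : x i = (r : ℤ) - 1 := by simpa [hp] using ihh hi
          have h2 := alt2 (i + 1) hi1 (by rw [hprev]; exact hxi)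
          rw [if_neg (by omega : ¬((i + 1) % 2 = 0))]
          exact h2
        · have hxi : x i = (r : ℤ) := by simpa [hp] using ihh hi
          have h2 := alt1 (i + 1) hi1 (by rw [hprev]; exact hxi)
          rw [if_pos (by omega : (i + 1) % 2 = 0)]
          exact h2
    have hmev : m % 2 = 0 := by
      by_contra hodd
      have h2 : x (m - 1) = (r : ℤ) - 1 := by
        have h3 := claim (m - 1) (by omega)
        simpa [show (m - 1) % 2 = 0 by omega] using h3
      have h3 := alt2 0 hm (by rw [hprev0]; exact h2)
      omega
    refine ⟨fun i hi => hD i hi, hmev, Or.inl fun i hi => ?_⟩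
    by_cases hp : i % 2 = 0
    · have hxi : x i = (r : ℤ) - 1 := by simpa [hp] using claim i hi
      rcases hx2 i hi with ⟨h5, _⟩ | ⟨_, hy⟩
      · exfalso; omega
      · rw [if_pos hp]; exact hy
    · have hxi : x i = (r : ℤ) := by simpa [hp] using claim i hi
      rcases hx2 i hi with ⟨_, hy⟩ | ⟨h5, _⟩
      · rw [if_neg hp]; exact hy
      · exfalso; omega
end
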